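/- Let a ∈ ℂ with a ≠ 0, a ≠ −1 and a ≠ 5, and let c ∈ ℂ satisfy c³ = (15 − 8a + a²)/(a·(a+1)) and c ≠ 0. Then D_a(c) ≠ 0 and the critical value v = R_a(c) satisfies v³ = a²·(25 − 6a + a²)³·(15 − 8a + a²)/((a−5)⁶·(a+1)⁴). -/

import Mathlib

/-- The rational map `R_a` obtained from the Chebyshev–Halley method applied to `z^3-1`. -/
noncomputable def Ra (a z : ℂ) : ℂ :=
  (2*a*z^6 + (15 - a)*z^3 + (3 - a)) / (3*z^2*(5 - a + (1 + a)*z^3))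

/-- The denominator of `R_a`. -/
noncomputable def Da (a z : ℂ) : ℂ := 3*z^2*(5 - a + (1 + a)*z^3)

/-- For a free critical point `c` of `R_a` (with `a ∉ {0,-1,5}`), `D_a(c) ≠ 0` and the
critical value `v = R_a(c)` satisfies
`v³ = a²(25-6a+a²)³(15-8a+a²)/((a-5)⁶(a+1)⁴)`. -/
theorem stmt_5 (a c : ℂ) (ha0 : a ≠ 0) (ha1 : a ≠ -1) (ha5 : a ≠ 5)
    (hc : c^3 = (15 - 8*a + a^2)/(a*(a+1))) (hc0 : c ≠ 0) :
    Da a c ≠ 0 ∧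
    (Ra a c)^3 = a^2*(25 - 6*a + a^2)^3*(15 - 8*a + a^2)/((a-5)^6*(a+1)^4) := by
  have haa : a + 1 ≠ 0 := fun h => ha1 (by linear_combination h)
  have h5 : (5:ℂ) - a ≠ 0 := fun h => ha5 (by linear_combination -h)
  have ha5' : a - 5 ≠ 0 := fun h => ha5 (by linear_combination h)
  have hA : a*(a+1) ≠ 0 := mul_ne_zero ha0 haa
  have hDval : Da a c = 9*c^2*(5-a)/a := by
    rw [Da, hc]; field_simp; ring
  have hDne : Da a c ≠ 0 := by
    rw [hDval]
    exact div_ne_zero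
      (mul_ne_zero (mul_ne_zero (by norm_num) (pow_ne_zero 2 hc0)) h5) ha0
  refine ⟨hDne, ?_⟩
  have hnum : 2*a*c^6 + (15 - a)*c^3 + (3 - a) =
      (2*(15-8*a+a^2)^2 + (15-a)*(15-8*a+a^2)*(a+1) + (3-a)*a*(a+1)^2)/(a*(a+1)^2) := by
    rw [show c^6 = (c^3)^2 by ring, hc]
    field_simp
  have hRa : Ra a c = (2*a*c^6 + (15 - a)*c^3 + (3 - a)) / Da a c := rfl
  have hc6 : c^6 = ((15 - 8*a + a^2)/(a*(a+1)))^2 := by rw [← hc]; ring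
  have hvc2 : Ra a c * c^2 = (2*a*c^6 + (15 - a)*c^3 + (3 - a)) * a / (9*(5-a)) := by
    rw [hRa, hDval]
    field_simp
  refine mul_right_cancel₀ (pow_ne_zero 6 hc0) ?_
  calc (Ra a c)^3 * c^6 = (Ra a c * c^2)^3 := by ring
    _ = ((2*a*c^6 + (15 - a)*c^3 + (3 - a)) * a / (9*(5-a)))^3 := by rw [hvc2]
    _ = a^2*(25 - 6*a + a^2)^3*(15 - 8*a + a^2)/((a-5)^6*(a+1)^4) * c^6 := by
        rw [hnum, hc6]
        field_simp
        ring
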